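/- Higher Dirac index theorem for O: let M ∈ O. Then in the Grothendieck group of weight modules, I_top(M) = [M ⊗ S⁺] − [M ⊗ S⁻], where I_top(M) = H_top(M)⁺ − H_top(M)⁻ is the higher Dirac index. Equivalently, for every weight μ: dim H_top(M)⁺_μ − dim H_top(M)⁻_μ = dim (M ⊗ S⁺)_μ − dim (M ⊗ S⁻)_μ. -/

import Mathlib

open Module LinearMap Submodule

section Helpers

variable {W : Type*} [AddCommGroup W] [Module ℂ W]

lemma stmt18_rn [FiniteDimensional ℂ W] (f : Module.End ℂ W) (X : Submodule ℂ W) :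
    finrank ℂ (X.map f : Submodule ℂ W)
      + finrank ℂ (LinearMap.ker f ⊓ X : Submodule ℂ W) = finrank ℂ X := by
  have h := LinearMap.finrank_range_add_finrank_ker (f ∘ₗ X.subtype)
  rw [LinearMap.range_comp, Submodule.range_subtype, LinearMap.ker_comp] at h
  rw [← h]
  congr 1
  rw [← Submodule.finrank_map_subtype_eq X, Submodule.map_comap_subtype, inf_comm]

lemma stmt18_distrib {P : Submodule ℂ W} (σ : Module.End ℂ W)
    (hσP : ∀ x, σ x ∈ P) (hσl : ∀ x ∈ P, σ x = x)
    {X Y : Submodule ℂ W} (hX : ∀ x ∈ X, σ x ∈ X) (hY : ∀ x ∈ Y, σ x ∈ Y) :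
    (X ⊔ Y) ⊓ P = (X ⊓ P) ⊔ (Y ⊓ P) := by
  refine le_antisymm ?_ (sup_le (inf_le_inf_right _ le_sup_left)
    (inf_le_inf_right _ le_sup_right))
  rintro x ⟨hxXY, hxP⟩
  obtain ⟨a, ha, b, hb, rfl⟩ := Submodule.mem_sup.mp hxXY
  have hab : σ a + σ b = a + b := by rw [← map_add]; exact hσl _ hxP
  exact hab ▸ Submodule.add_mem_sup ⟨hX a ha, hσP a⟩ ⟨hY b hb, hσP b⟩

lemma stmt18_mapinf {P Q : Submodule ℂ W} (σ : Module.End ℂ W)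
    (hσP : ∀ x, σ x ∈ P) (hτQ : ∀ x, x - σ x ∈ Q) (hd : Disjoint P Q)
    (E : Module.End ℂ W) (hp : ∀ x ∈ P, E x ∈ Q) (hq : ∀ x ∈ Q, E x ∈ P)
    {X : Submodule ℂ W} (hX : ∀ x ∈ X, σ x ∈ X) :
    X.map E ⊓ P = (X ⊓ Q).map E := by
  refine le_antisymm ?_ (le_inf (Submodule.map_mono inf_le_left) ?_)
  · rintro x ⟨hxm, hxP⟩
    obtain ⟨u, huX, rfl⟩ := hxm
    have h1 : E (σ u) ∈ Q := hp _ (hσP u)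
    have h2 : E (u - σ u) ∈ P := hq _ (hτQ u)
    have h3 : E (σ u) ∈ P := by
      have h4 : E (σ u) = E u - E (u - σ u) := by rw [map_sub, sub_sub_cancel]
      rw [h4]; exact Submodule.sub_mem _ hxP h2
    have h0 : E (σ u) = 0 := Submodule.disjoint_def.mp hd _ h3 h1
    have h5 : E u = E (u - σ u) := by rw [map_sub, h0, sub_zero]
    rw [h5]
    exact Submodule.mem_map_of_mem ⟨Submodule.sub_mem _ huX (hX u huX), hτQ u⟩
  · rintro x ⟨u, ⟨_, huQ⟩, rfl⟩
    exact hq _ huQ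

set_option maxHeartbeats 2000000 in
theorem stmt18_aux [FiniteDimensional ℂ W]
    (P Q : Submodule ℂ W) (hc : IsCompl P Q) (E : Module.End ℂ W)
    (hp : ∀ x ∈ P, E x ∈ Q) (hq : ∀ x ∈ Q, E x ∈ P) :
    ∑ᶠ k : ℕ,
      (((finrank ℂ (LinearMap.ker (E ^ (2 * k + 1)) ⊓ P : Submodule ℂ W) : ℤ)
        - finrank ℂ (((LinearMap.ker (E ^ (2 * k + 1)) ⊓ LinearMap.range E
            ⊔ LinearMap.ker (E ^ (2 * k))) ⊓ P : Submodule ℂ W)))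
       - ((finrank ℂ (LinearMap.ker (E ^ (2 * k + 1)) ⊓ Q : Submodule ℂ W) : ℤ)
        - finrank ℂ (((LinearMap.ker (E ^ (2 * k + 1)) ⊓ LinearMap.range E
            ⊔ LinearMap.ker (E ^ (2 * k))) ⊓ Q : Submodule ℂ W))))
      = (finrank ℂ P : ℤ) - finrank ℂ Q := by
  classical
  -- the projection onto P along Q, and its complement
  set σ : Module.End ℂ W := P.subtype ∘ₗ P.projectionOnto Q hc with hσdef
  have hσcoe : ∀ x, σ x = ↑(P.projectionOnto Q hc x) := fun x => rfl
  have hσP : ∀ x, σ x ∈ P := fun x => (P.projectionOnto Q hc x).2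
  have hσl : ∀ x ∈ P, σ x = x := by
    intro x hx
    rw [hσcoe, Submodule.projectionOnto_apply_left hc ⟨x, hx⟩]
  have hσr : ∀ x ∈ Q, σ x = 0 := by
    intro x hx
    rw [hσcoe, Submodule.projectionOnto_apply_of_mem_right hc hx]; rfl
  have hτQ : ∀ x, x - σ x ∈ Q := by
    intro x
    have h1 : P.projectionOnto Q hc (σ x) = P.projectionOnto Q hc x := by
      rw [hσcoe, Submodule.projectionOnto_apply_left hc]
    have h2 : P.projectionOnto Q hc (x - σ x) = 0 := by
      rw [map_sub, h1, sub_self]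
    exact (Submodule.projectionOnto_apply_eq_zero_iff hc).mp h2
  set σ' : Module.End ℂ W := 1 - σ with hσ'def
  have hσ'x : ∀ x, σ' x = x - σ x := fun x => by
    rw [hσ'def, LinearMap.sub_apply, Module.End.one_apply]
  have hσ'Q : ∀ x, σ' x ∈ Q := fun x => (hσ'x x) ▸ hτQ x
  have hσ'l : ∀ x ∈ Q, σ' x = x := fun x hx => by rw [hσ'x, hσr x hx, sub_zero]
  have hτ'P : ∀ x, x - σ' x ∈ P := fun x => by
    rw [hσ'x, sub_sub_cancel]; exact hσP x
  -- commutation relations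
  have hσE : ∀ x, σ (E x) = E x - E (σ x) := by
    intro x
    have h1 : E (σ x) ∈ Q := hp _ (hσP x)
    have h2 : E (x - σ x) ∈ P := hq _ (hτQ x)
    have h3 : E x = E (σ x) + E (x - σ x) := by rw [← map_add, add_sub_cancel]
    have h4 : σ (E x) = E (x - σ x) := by
      conv_lhs => rw [h3]
      rw [map_add, hσr _ h1, hσl _ h2, zero_add]
    rw [h4, map_sub]
  have hEσ : ∀ x, E (σ x) = E x - σ (E x) := fun x => by rw [hσE]; abel
  -- stability of kernels and ranges under σ
  have hkstab : ∀ n, ∀ x ∈ LinearMap.ker (E ^ n), σ x ∈ LinearMap.ker (E ^ n) := by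
    intro n
    induction n with
    | zero =>
      intro x hx
      rw [pow_zero, LinearMap.mem_ker, Module.End.one_apply] at hx ⊢
      rw [hx, map_zero]
    | succ n ih =>
      intro x hx
      rw [LinearMap.mem_ker, pow_succ, Module.End.mul_apply] at hx ⊢
      have h1 := ih (E x) (by rwa [LinearMap.mem_ker])
      rw [LinearMap.mem_ker] at h1
      rw [hEσ x, map_sub, hx, h1, sub_zero]
  have hrstab : ∀ n, ∀ x ∈ LinearMap.range (E ^ n), σ x ∈ LinearMap.range (E ^ n) := by
    intro n
    induction n with
    | zero =>
      intro x _
      rw [pow_zero]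
      exact ⟨σ x, Module.End.one_apply _⟩
    | succ n ih =>
      rintro x ⟨u, rfl⟩
      have e1 : (E ^ (n + 1)) u = E ((E ^ n) u) := by rw [pow_succ', Module.End.mul_apply]
      obtain ⟨v, hv⟩ := ih ((E ^ n) u) ⟨u, rfl⟩
      refine ⟨u - v, ?_⟩
      have e2 : (E ^ (n + 1)) (u - v) = E ((E ^ n) (u - v)) := by
        rw [pow_succ', Module.End.mul_apply]
      rw [e2, map_sub, map_sub, hv, ← hσE, ← e1]
  have hrstab1 : ∀ x ∈ LinearMap.range E, σ x ∈ LinearMap.range E := by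
    rintro x ⟨u, rfl⟩
    exact ⟨u - σ u, by rw [map_sub, hσE]⟩
  -- monotonicity of kernels
  have hmono : ∀ {a b : ℕ}, a ≤ b → LinearMap.ker (E ^ a) ≤ LinearMap.ker (E ^ b) := by
    intro a b h
    obtain ⟨c, rfl⟩ := Nat.exists_eq_add_of_le h
    intro x hx
    rw [LinearMap.mem_ker] at hx ⊢
    rw [add_comm, pow_add, Module.End.mul_apply, hx, map_zero]
  have hker1 : ∀ {b : ℕ}, 1 ≤ b → LinearMap.ker E ≤ LinearMap.ker (E ^ b) := by
    intro b hb
    have := hmono hb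
    rwa [pow_one] at this
  -- kernels meet the range in images of bigger kernels
  have himg : ∀ m : ℕ, LinearMap.ker (E ^ m) ⊓ LinearMap.range E
      = (LinearMap.ker (E ^ (m + 1))).map E := by
    intro m
    ext x
    simp only [Submodule.mem_inf, LinearMap.mem_ker, LinearMap.mem_range, Submodule.mem_map]
    constructor
    · rintro ⟨hk, u, rfl⟩
      exact ⟨u, by rw [pow_succ, Module.End.mul_apply]; exact hk, rfl⟩
    · rintro ⟨u, hu, rfl⟩
      exact ⟨by rw [← Module.End.mul_apply, ← pow_succ]; exact hu, u, rfl⟩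
  -- dimension of (ker E^m).map E intersected with P resp. Q
  have hcompP : ∀ m : ℕ, 1 ≤ m →
      (finrank ℂ ((LinearMap.ker (E ^ m)).map E ⊓ P : Submodule ℂ W) : ℤ)
        = (finrank ℂ (LinearMap.ker (E ^ m) ⊓ Q : Submodule ℂ W) : ℤ)
          - finrank ℂ (LinearMap.ker E ⊓ Q : Submodule ℂ W) := by
    intro m hm
    rw [stmt18_mapinf σ hσP hτQ hc.disjoint E hp hq (hkstab m)]
    have h := stmt18_rn E (LinearMap.ker (E ^ m) ⊓ Q)
    have e1 : LinearMap.ker E ⊓ (LinearMap.ker (E ^ m) ⊓ Q) = LinearMap.ker E ⊓ Q := by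
      rw [← inf_assoc, inf_eq_left.mpr (hker1 hm)]
    rw [e1] at h
    omega
  have hcompQ : ∀ m : ℕ, 1 ≤ m →
      (finrank ℂ ((LinearMap.ker (E ^ m)).map E ⊓ Q : Submodule ℂ W) : ℤ)
        = (finrank ℂ (LinearMap.ker (E ^ m) ⊓ P : Submodule ℂ W) : ℤ)
          - finrank ℂ (LinearMap.ker E ⊓ P : Submodule ℂ W) := by
    intro m hm
    rw [stmt18_mapinf σ' hσ'Q hτ'P hc.disjoint.symm E hq hp
      (fun x hx => by rw [hσ'x]; exact Submodule.sub_mem _ hx (hkstab m x hx))]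
    have h := stmt18_rn E (LinearMap.ker (E ^ m) ⊓ P)
    have e1 : LinearMap.ker E ⊓ (LinearMap.ker (E ^ m) ⊓ P) = LinearMap.ker E ⊓ P := by
      rw [← inf_assoc, inf_eq_left.mpr (hker1 hm)]
    rw [e1] at h
    omega
  -- the super-dimension of kernels
  set g : ℕ → ℤ := fun n =>
    (finrank ℂ (LinearMap.ker (E ^ n) ⊓ P : Submodule ℂ W) : ℤ)
      - finrank ℂ (LinearMap.ker (E ^ n) ⊓ Q : Submodule ℂ W) with hg
  -- the key per-term identity
  have key : ∀ k : ℕ,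
      (((finrank ℂ (LinearMap.ker (E ^ (2 * k + 1)) ⊓ P : Submodule ℂ W) : ℤ)
        - finrank ℂ (((LinearMap.ker (E ^ (2 * k + 1)) ⊓ LinearMap.range E
            ⊔ LinearMap.ker (E ^ (2 * k))) ⊓ P : Submodule ℂ W)))
       - ((finrank ℂ (LinearMap.ker (E ^ (2 * k + 1)) ⊓ Q : Submodule ℂ W) : ℤ)
        - finrank ℂ (((LinearMap.ker (E ^ (2 * k + 1)) ⊓ LinearMap.range E
            ⊔ LinearMap.ker (E ^ (2 * k))) ⊓ Q : Submodule ℂ W))))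
      = g (2 * k + 2) - g (2 * k) := by
    intro k
    set A : Submodule ℂ W := LinearMap.ker (E ^ (2 * k + 1)) ⊓ LinearMap.range E with hA
    set B : Submodule ℂ W := LinearMap.ker (E ^ (2 * k)) with hB
    have hAstab : ∀ x ∈ A, σ x ∈ A := fun x hx => ⟨hkstab _ _ hx.1, hrstab1 _ hx.2⟩
    have hBstab : ∀ x ∈ B, σ x ∈ B := hkstab _
    have hAstab' : ∀ x ∈ A, σ' x ∈ A := fun x hx => by
      rw [hσ'x]; exact Submodule.sub_mem _ hx (hAstab x hx)
    have hBstab' : ∀ x ∈ B, σ' x ∈ B := fun x hx => by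
      rw [hσ'x]; exact Submodule.sub_mem _ hx (hBstab x hx)
    have hAeq : A = (LinearMap.ker (E ^ (2 * k + 2))).map E := by
      rw [hA, himg (2 * k + 1)]
    have hABeq : A ⊓ B = (LinearMap.ker (E ^ (2 * k + 1))).map E := by
      have h1 : A ⊓ B = B ⊓ LinearMap.range E := by
        rw [hA, inf_right_comm,
          inf_eq_right.mpr (hmono (show 2 * k ≤ 2 * k + 1 by omega))]
      rw [h1, hB, himg (2 * k)]
    have hLP : (finrank ℂ ((A ⊔ B) ⊓ P : Submodule ℂ W) : ℤ)
        = (finrank ℂ (A ⊓ P : Submodule ℂ W) : ℤ) + finrank ℂ (B ⊓ P : Submodule ℂ W)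
          - finrank ℂ ((A ⊓ B) ⊓ P : Submodule ℂ W) := by
      rw [stmt18_distrib σ hσP hσl hAstab hBstab]
      have h := Submodule.finrank_sup_add_finrank_inf_eq (A ⊓ P) (B ⊓ P)
      have e : (A ⊓ P) ⊓ (B ⊓ P) = (A ⊓ B) ⊓ P := by
        rw [inf_inf_inf_comm, inf_idem]
      rw [e] at h
      omega
    have hLQ : (finrank ℂ ((A ⊔ B) ⊓ Q : Submodule ℂ W) : ℤ)
        = (finrank ℂ (A ⊓ Q : Submodule ℂ W) : ℤ) + finrank ℂ (B ⊓ Q : Submodule ℂ W)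
          - finrank ℂ ((A ⊓ B) ⊓ Q : Submodule ℂ W) := by
      rw [stmt18_distrib σ' hσ'Q hσ'l hAstab' hBstab']
      have h := Submodule.finrank_sup_add_finrank_inf_eq (A ⊓ Q) (B ⊓ Q)
      have e : (A ⊓ Q) ⊓ (B ⊓ Q) = (A ⊓ B) ⊓ Q := by
        rw [inf_inf_inf_comm, inf_idem]
      rw [e] at h
      omega
    have hAP : (finrank ℂ (A ⊓ P : Submodule ℂ W) : ℤ)
        = (finrank ℂ (LinearMap.ker (E ^ (2 * k + 2)) ⊓ Q : Submodule ℂ W) : ℤ)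
          - finrank ℂ (LinearMap.ker E ⊓ Q : Submodule ℂ W) := by
      rw [hAeq]; exact hcompP (2 * k + 2) (by omega)
    have hAQ : (finrank ℂ (A ⊓ Q : Submodule ℂ W) : ℤ)
        = (finrank ℂ (LinearMap.ker (E ^ (2 * k + 2)) ⊓ P : Submodule ℂ W) : ℤ)
          - finrank ℂ (LinearMap.ker E ⊓ P : Submodule ℂ W) := by
      rw [hAeq]; exact hcompQ (2 * k + 2) (by omega)
    have hABP : (finrank ℂ ((A ⊓ B) ⊓ P : Submodule ℂ W) : ℤ)
        = (finrank ℂ (LinearMap.ker (E ^ (2 * k + 1)) ⊓ Q : Submodule ℂ W) : ℤ)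
          - finrank ℂ (LinearMap.ker E ⊓ Q : Submodule ℂ W) := by
      rw [hABeq]; exact hcompP (2 * k + 1) (by omega)
    have hABQ : (finrank ℂ ((A ⊓ B) ⊓ Q : Submodule ℂ W) : ℤ)
        = (finrank ℂ (LinearMap.ker (E ^ (2 * k + 1)) ⊓ P : Submodule ℂ W) : ℤ)
          - finrank ℂ (LinearMap.ker E ⊓ P : Submodule ℂ W) := by
      rw [hABeq]; exact hcompQ (2 * k + 1) (by omega)
    rw [hg]
    rw [hLP, hLQ, hAP, hAQ, hABP, hABQ]
    ring
  -- stabilization of kernels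
  have hstabk : ∀ n, finrank ℂ W ≤ n →
      LinearMap.ker (E ^ n) = LinearMap.ker (E ^ (finrank ℂ W + 1)) := by
    intro n hn
    rw [Module.End.ker_pow_eq_ker_pow_finrank_of_le hn,
      Module.End.ker_pow_eq_ker_pow_finrank_of_le (show finrank ℂ W ≤ finrank ℂ W + 1 by omega)]
  set r := finrank ℂ W with hr
  have hgstab : ∀ n, r ≤ n → g n = g (r + 1) := by
    intro n hn
    simp only [hg]
    rw [hstabk n hn]
  -- the terms vanish eventually
  have hsupp : (Function.support fun k : ℕ =>
      (((finrank ℂ (LinearMap.ker (E ^ (2 * k + 1)) ⊓ P : Submodule ℂ W) : ℤ)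
        - finrank ℂ (((LinearMap.ker (E ^ (2 * k + 1)) ⊓ LinearMap.range E
            ⊔ LinearMap.ker (E ^ (2 * k))) ⊓ P : Submodule ℂ W)))
       - ((finrank ℂ (LinearMap.ker (E ^ (2 * k + 1)) ⊓ Q : Submodule ℂ W) : ℤ)
        - finrank ℂ (((LinearMap.ker (E ^ (2 * k + 1)) ⊓ LinearMap.range E
            ⊔ LinearMap.ker (E ^ (2 * k))) ⊓ Q : Submodule ℂ W)))))
      ⊆ ↑(Finset.range (r + 2)) := by
    intro k hk
    simp only [Function.mem_support] at hk
    by_contra hmem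
    have hk2 : r + 2 ≤ k := by
      simpa [Finset.mem_coe, Finset.mem_range, not_lt] using hmem
    apply hk
    rw [key k, hgstab (2 * k + 2) (by omega), hgstab (2 * k) (by omega), sub_self]
  rw [finsum_eq_sum_of_support_subset _ hsupp]
  calc (∑ k ∈ Finset.range (r + 2),
      (((finrank ℂ (LinearMap.ker (E ^ (2 * k + 1)) ⊓ P : Submodule ℂ W) : ℤ)
        - finrank ℂ (((LinearMap.ker (E ^ (2 * k + 1)) ⊓ LinearMap.range E
            ⊔ LinearMap.ker (E ^ (2 * k))) ⊓ P : Submodule ℂ W)))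
       - ((finrank ℂ (LinearMap.ker (E ^ (2 * k + 1)) ⊓ Q : Submodule ℂ W) : ℤ)
        - finrank ℂ (((LinearMap.ker (E ^ (2 * k + 1)) ⊓ LinearMap.range E
            ⊔ LinearMap.ker (E ^ (2 * k))) ⊓ Q : Submodule ℂ W)))))
      = ∑ k ∈ Finset.range (r + 2),
          ((fun j => g (2 * j)) (k + 1) - (fun j => g (2 * j)) k) := by
        refine Finset.sum_congr rfl fun k _ => ?_
        simpa only [Nat.mul_succ] using key k
    _ = (fun j => g (2 * j)) (r + 2) - (fun j => g (2 * j)) 0 :=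
        Finset.sum_range_sub (fun j => g (2 * j)) (r + 2)
    _ = g (2 * (r + 2)) - g 0 := rfl
    _ = (finrank ℂ P : ℤ) - finrank ℂ Q := ?_
  -- g 0 = 0
  have hg0 : g 0 = 0 := by
    simp only [hg]
    rw [pow_zero, Module.End.one_eq_id, LinearMap.ker_id, bot_inf_eq, bot_inf_eq,
      finrank_bot ℂ W, sub_self]
  rw [hg0, sub_zero, hgstab (2 * (r + 2)) (by omega)]
  -- the Fitting argument: g (r+1) = finrank P - finrank Q
  have hdisjNR : LinearMap.ker (E ^ (r + 1)) ⊓ LinearMap.range (E ^ (r + 1)) = ⊥ := by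
    rw [eq_bot_iff]
    rintro x ⟨hk, hr2⟩
    obtain ⟨u, rfl⟩ := hr2
    have hu : u ∈ LinearMap.ker (E ^ ((r + 1) + (r + 1))) := by
      rw [LinearMap.mem_ker, pow_add, Module.End.mul_apply]
      exact LinearMap.mem_ker.mp hk
    rw [hstabk ((r + 1) + (r + 1)) (by omega)] at hu
    have h0 : (E ^ (r + 1)) u = 0 := LinearMap.mem_ker.mp hu
    simp [h0]
  have hrk1 := LinearMap.finrank_range_add_finrank_ker (E ^ (r + 1))
  have htop : LinearMap.ker (E ^ (r + 1)) ⊔ LinearMap.range (E ^ (r + 1)) = ⊤ :=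
    Submodule.eq_top_of_disjoint _ _ (by omega) (disjoint_iff.mpr hdisjNR)
  have hRstab' : ∀ x ∈ LinearMap.range (E ^ (r + 1)), σ' x ∈ LinearMap.range (E ^ (r + 1)) :=
    fun x hx => by rw [hσ'x]; exact Submodule.sub_mem _ hx (hrstab (r + 1) x hx)
  have hNstab' : ∀ x ∈ LinearMap.ker (E ^ (r + 1)), σ' x ∈ LinearMap.ker (E ^ (r + 1)) :=
    fun x hx => by rw [hσ'x]; exact Submodule.sub_mem _ hx (hkstab (r + 1) x hx)
  have hPsplit : finrank ℂ P
      = finrank ℂ (LinearMap.ker (E ^ (r + 1)) ⊓ P : Submodule ℂ W)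
        + finrank ℂ (LinearMap.range (E ^ (r + 1)) ⊓ P : Submodule ℂ W) := by
    have h1 := stmt18_distrib σ hσP hσl (hkstab (r + 1)) (hrstab (r + 1))
    rw [htop, top_inf_eq] at h1
    have h2 := Submodule.finrank_sup_add_finrank_inf_eq
      (LinearMap.ker (E ^ (r + 1)) ⊓ P) (LinearMap.range (E ^ (r + 1)) ⊓ P)
    have e : (LinearMap.ker (E ^ (r + 1)) ⊓ P) ⊓ (LinearMap.range (E ^ (r + 1)) ⊓ P) = ⊥ := by
      rw [inf_inf_inf_comm, inf_idem, hdisjNR, bot_inf_eq]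
    rw [← h1, e, finrank_bot] at h2
    omega
  have hQsplit : finrank ℂ Q
      = finrank ℂ (LinearMap.ker (E ^ (r + 1)) ⊓ Q : Submodule ℂ W)
        + finrank ℂ (LinearMap.range (E ^ (r + 1)) ⊓ Q : Submodule ℂ W) := by
    have h1 := stmt18_distrib σ' hσ'Q hσ'l hNstab' hRstab'
    rw [htop, top_inf_eq] at h1
    have h2 := Submodule.finrank_sup_add_finrank_inf_eq
      (LinearMap.ker (E ^ (r + 1)) ⊓ Q) (LinearMap.range (E ^ (r + 1)) ⊓ Q)
    have e : (LinearMap.ker (E ^ (r + 1)) ⊓ Q) ⊓ (LinearMap.range (E ^ (r + 1)) ⊓ Q) = ⊥ := by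
      rw [inf_inf_inf_comm, inf_idem, hdisjNR, bot_inf_eq]
    rw [← h1, e, finrank_bot] at h2
    omega
  have hR1 : LinearMap.range (E ^ (r + 2)) = LinearMap.range (E ^ (r + 1)) := by
    apply Submodule.eq_of_le_of_finrank_eq
    · rintro x ⟨u, rfl⟩
      exact ⟨E u, by rw [← Module.End.mul_apply, ← pow_succ]⟩
    · have ha := LinearMap.finrank_range_add_finrank_ker (E ^ (r + 2))
      have hb := LinearMap.finrank_range_add_finrank_ker (E ^ (r + 1))
      have hc2 : LinearMap.ker (E ^ (r + 2)) = LinearMap.ker (E ^ (r + 1)) :=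
        hstabk _ (by omega)
      rw [hc2] at ha
      omega
  have hmapR : (LinearMap.range (E ^ (r + 1))).map E = LinearMap.range (E ^ (r + 1)) := by
    rw [← LinearMap.range_comp, ← Module.End.mul_eq_comp, ← pow_succ', hR1]
  have hRPQ : finrank ℂ (LinearMap.range (E ^ (r + 1)) ⊓ Q : Submodule ℂ W)
      = finrank ℂ (LinearMap.range (E ^ (r + 1)) ⊓ P : Submodule ℂ W) := by
    have h1 := stmt18_mapinf σ' hσ'Q hτ'P hc.disjoint.symm E hq hp hRstab'
    rw [hmapR] at h1
    have h2 := stmt18_rn E (LinearMap.range (E ^ (r + 1)) ⊓ P)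
    have e : LinearMap.ker E ⊓ (LinearMap.range (E ^ (r + 1)) ⊓ P) = ⊥ := by
      rw [eq_bot_iff]
      intro x hx
      have h3 : x ∈ LinearMap.ker (E ^ (r + 1)) ⊓ LinearMap.range (E ^ (r + 1)) :=
        ⟨hker1 (by omega) hx.1, hx.2.1⟩
      rw [hdisjNR] at h3
      exact h3
    rw [← h1, e, finrank_bot] at h2
    omega
  simp only [hg]
  omega
end Helpers

set_option maxHeartbeats 1000000 in
/-- higher Dirac index theorem for `O`: let `M ∈ O` and `V = M ⊗ S`
with its weight space decomposition `wt` (finite-dimensional weight spaces, preserved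
by the Dirac operator `D`), and the ℤ₂-grading `V = V⁺ ⊕ V⁻` coming from
`S = S⁺ ⊕ S⁻` (compatible with the weight decomposition, `D` odd).  Then for every
weight `μ`, with `H_top^k = ker D^{2k+1}/(ker D^{2k+1} ∩ im D + ker D^{2k})`:
`dim H_top(M)⁺_μ − dim H_top(M)⁻_μ = dim (M ⊗ S⁺)_μ − dim (M ⊗ S⁻)_μ`,
i.e. `I_top(M) = [M ⊗ S⁺] − [M ⊗ S⁻]` in the Grothendieck group of weight modules. -/
theorem stmt18 {Λ V : Type*} [DecidableEq Λ] [AddCommGroup V] [Module ℂ V]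
    (wt : Λ → Submodule ℂ V)
    (hinternal : DirectSum.IsInternal wt)
    (hfinwt : ∀ ν : Λ, FiniteDimensional ℂ (wt ν))
    (Vp Vm : Submodule ℂ V) (hcompl : IsCompl Vp Vm)
    (hgrade : ∀ ν : Λ, wt ν = (wt ν ⊓ Vp) ⊔ (wt ν ⊓ Vm))
    (D : Module.End ℂ V)
    (hDwt : ∀ ν : Λ, (wt ν).map D ≤ wt ν)
    (hoddp : Vp.map D ≤ Vm) (hoddm : Vm.map D ≤ Vp)
    (μ : Λ) :
    ∑ᶠ k : ℕ,
      (((Module.finrank ℂ (LinearMap.ker (D ^ (2 * k + 1)) ⊓ wt μ ⊓ Vp :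
            Submodule ℂ V) : ℤ)
        - Module.finrank ℂ (((LinearMap.ker (D ^ (2 * k + 1)) ⊓ LinearMap.range D
            ⊔ LinearMap.ker (D ^ (2 * k))) ⊓ wt μ ⊓ Vp : Submodule ℂ V)))
       - ((Module.finrank ℂ (LinearMap.ker (D ^ (2 * k + 1)) ⊓ wt μ ⊓ Vm :
            Submodule ℂ V) : ℤ)
        - Module.finrank ℂ (((LinearMap.ker (D ^ (2 * k + 1)) ⊓ LinearMap.range D
            ⊔ LinearMap.ker (D ^ (2 * k))) ⊓ wt μ ⊓ Vm : Submodule ℂ V))))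
      = (Module.finrank ℂ (wt μ ⊓ Vp : Submodule ℂ V) : ℤ)
        - Module.finrank ℂ (wt μ ⊓ Vm : Submodule ℂ V) := by
  classical
  haveI : FiniteDimensional ℂ (wt μ) := hfinwt μ
  set U : Submodule ℂ V := ⨆ (ν : Λ) (_ : ν ≠ μ), wt ν with hU
  have hUD : ∀ x ∈ U, D x ∈ U := by
    intro x hx
    have hle : U ≤ Submodule.comap D U := by
      refine iSup₂_le fun ν hν => ?_
      intro y hy
      exact Submodule.mem_comap.mpr
        (le_iSup₂ (f := fun (ν : Λ) (_ : ν ≠ μ) => wt ν) ν hν (hDwt ν ⟨y, hy, rfl⟩))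
    exact hle hx
  have hdisj : Disjoint (wt μ) U :=
    hinternal.submodule_iSupIndep.disjoint_biSup (by simp : μ ∉ {ν : Λ | ν ≠ μ})
  have hcod : wt μ ⊔ U = ⊤ := by
    refine le_antisymm le_top ?_
    rw [← hinternal.submodule_iSup_eq_top]
    refine iSup_le fun ν => ?_
    by_cases h : ν = μ
    · subst h; exact le_sup_left
    · exact le_trans (le_iSup₂ (f := fun (ν : Λ) (_ : ν ≠ μ) => wt ν) ν h) le_sup_right
  have hWU : IsCompl (wt μ) U := ⟨hdisj, codisjoint_iff.mpr hcod⟩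
  set π : V →ₗ[ℂ] V := (wt μ).subtype ∘ₗ (wt μ).projectionOnto U hWU with hπ
  have hπcoe : ∀ x, π x = ↑((wt μ).projectionOnto U hWU x) := fun x => rfl
  have hπmem : ∀ x, π x ∈ wt μ := fun x => ((wt μ).projectionOnto U hWU x).2
  have hπl : ∀ x ∈ wt μ, π x = x := by
    intro x hx
    rw [hπcoe, Submodule.projectionOnto_apply_left hWU ⟨x, hx⟩]
  have hπr : ∀ x ∈ U, π x = 0 := by
    intro x hx
    rw [hπcoe, Submodule.projectionOnto_apply_of_mem_right hWU hx]; rfl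
  have hπD : ∀ x, π (D x) = D (π x) := by
    intro x
    have hx : x ∈ wt μ ⊔ U := by rw [hcod]; trivial
    obtain ⟨w, hw, u, hu, rfl⟩ := Submodule.mem_sup.mp hx
    have h1 : D w ∈ wt μ := hDwt μ ⟨w, hw, rfl⟩
    have h2 : D u ∈ U := hUD u hu
    calc π (D (w + u)) = π (D w) + π (D u) := by rw [map_add, map_add]
      _ = D w := by rw [hπl _ h1, hπr _ h2, add_zero]
      _ = D (π (w + u)) := by rw [map_add, hπl _ hw, hπr _ hu, add_zero]
  have hπDn : ∀ (n : ℕ) (x : V), π ((D ^ n) x) = (D ^ n) (π x) := by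
    intro n
    induction n with
    | zero => intro x; simp
    | succ n ih =>
      intro x
      simp only [pow_succ, Module.End.mul_apply]
      rw [ih, hπD]
  have hkst : ∀ n, ∀ x ∈ LinearMap.ker (D ^ n), π x ∈ LinearMap.ker (D ^ n) := by
    intro n x hx
    rw [LinearMap.mem_ker] at hx ⊢
    rw [← hπDn, hx, map_zero]
  have hrst : ∀ x ∈ LinearMap.range D, π x ∈ LinearMap.range D := by
    rintro x ⟨u, rfl⟩
    exact ⟨π u, (hπD u).symm⟩
  -- restriction to the weight space
  have hDW : ∀ x ∈ wt μ, D x ∈ wt μ := fun x hx => hDwt μ ⟨x, hx, rfl⟩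
  set E : Module.End ℂ (wt μ) := D.restrict hDW with hE
  have hkerE : ∀ n : ℕ,
      LinearMap.ker (E ^ n) = (LinearMap.ker (D ^ n)).comap (wt μ).subtype := by
    intro n
    rw [hE, Module.End.pow_restrict, LinearMap.ker_restrict]
  have hrangeE : LinearMap.range E = (LinearMap.range D).comap (wt μ).subtype := by
    apply le_antisymm
    · rintro y ⟨x, rfl⟩
      show (↑(E x) : V) ∈ LinearMap.range D
      rw [hE, LinearMap.restrict_coe_apply]
      exact ⟨x.1, rfl⟩
    · rintro y hy
      obtain ⟨u, hu⟩ := hy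
      have h1 : (y : V) = D (π u) := by
        rw [← hπD, show D u = (y : V) from hu, hπl _ y.2]
      refine ⟨⟨π u, hπmem u⟩, ?_⟩
      apply Subtype.ext
      rw [hE, LinearMap.restrict_coe_apply]
      exact h1.symm
  set P : Submodule ℂ (wt μ) := Vp.comap (wt μ).subtype with hP
  set Q : Submodule ℂ (wt μ) := Vm.comap (wt μ).subtype with hQ
  have hPQ : IsCompl P Q := by
    constructor
    · rw [disjoint_iff, eq_bot_iff]
      rintro x ⟨hx1, hx2⟩
      exact (Submodule.mem_bot ℂ).mpr
        (Subtype.ext (Submodule.disjoint_def.mp hcompl.disjoint x.1 hx1 hx2))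
    · rw [codisjoint_iff, eq_top_iff]
      rintro x -
      have hx : (x : V) ∈ (wt μ ⊓ Vp) ⊔ (wt μ ⊓ Vm) := by rw [← hgrade μ]; exact x.2
      obtain ⟨a, ha, b, hb, hab⟩ := Submodule.mem_sup.mp hx
      exact Submodule.mem_sup.mpr ⟨⟨a, ha.1⟩, ha.2, ⟨b, hb.1⟩, hb.2, Subtype.ext hab⟩
  have hpE : ∀ x ∈ P, E x ∈ Q := by
    intro x hx
    show (↑(E x) : V) ∈ Vm
    rw [hE, LinearMap.restrict_coe_apply]
    exact hoddp ⟨x.1, hx, rfl⟩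
  have hqE : ∀ x ∈ Q, E x ∈ P := by
    intro x hx
    show (↑(E x) : V) ∈ Vp
    rw [hE, LinearMap.restrict_coe_apply]
    exact hoddm ⟨x.1, hx, rfl⟩
  -- transfer of dimensions
  have tmainP : ∀ n : ℕ,
      finrank ℂ (LinearMap.ker (D ^ n) ⊓ wt μ ⊓ Vp : Submodule ℂ V)
        = finrank ℂ (LinearMap.ker (E ^ n) ⊓ P : Submodule ℂ (wt μ)) := by
    intro n
    have hsub : LinearMap.ker (D ^ n) ⊓ wt μ ⊓ Vp
        = Submodule.map (wt μ).subtype (LinearMap.ker (E ^ n) ⊓ P) := by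
      rw [hkerE, hP, ← Submodule.comap_inf, Submodule.map_comap_subtype,
        inf_right_comm, inf_comm]
    rw [hsub, Submodule.finrank_map_subtype_eq]
  have tmainQ : ∀ n : ℕ,
      finrank ℂ (LinearMap.ker (D ^ n) ⊓ wt μ ⊓ Vm : Submodule ℂ V)
        = finrank ℂ (LinearMap.ker (E ^ n) ⊓ Q : Submodule ℂ (wt μ)) := by
    intro n
    have hsub : LinearMap.ker (D ^ n) ⊓ wt μ ⊓ Vm
        = Submodule.map (wt μ).subtype (LinearMap.ker (E ^ n) ⊓ Q) := by
      rw [hkerE, hQ, ← Submodule.comap_inf, Submodule.map_comap_subtype,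
        inf_right_comm, inf_comm]
    rw [hsub, Submodule.finrank_map_subtype_eq]
  have tLP : ∀ a b : ℕ,
      finrank ℂ ((LinearMap.ker (D ^ a) ⊓ LinearMap.range D ⊔ LinearMap.ker (D ^ b))
          ⊓ wt μ ⊓ Vp : Submodule ℂ V)
        = finrank ℂ ((LinearMap.ker (E ^ a) ⊓ LinearMap.range E ⊔ LinearMap.ker (E ^ b))
          ⊓ P : Submodule ℂ (wt μ)) := by
    intro a b
    have hstabA : ∀ x ∈ LinearMap.ker (D ^ a) ⊓ LinearMap.range D,
        π x ∈ LinearMap.ker (D ^ a) ⊓ LinearMap.range D :=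
      fun x hx => ⟨hkst a x hx.1, hrst x hx.2⟩
    have hdist := stmt18_distrib (P := wt μ) π hπmem hπl hstabA (hkst b)
    have hS'le : (wt μ ⊓ (LinearMap.ker (D ^ a) ⊓ LinearMap.range D))
        ⊔ (wt μ ⊓ LinearMap.ker (D ^ b)) ≤ wt μ := sup_le inf_le_left inf_le_left
    have hsub : (LinearMap.ker (D ^ a) ⊓ LinearMap.range D ⊔ LinearMap.ker (D ^ b))
          ⊓ wt μ ⊓ Vp
        = Submodule.map (wt μ).subtype
          ((LinearMap.ker (E ^ a) ⊓ LinearMap.range E ⊔ LinearMap.ker (E ^ b)) ⊓ P) := by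
      rw [Submodule.map_inf _ (Submodule.injective_subtype _), Submodule.map_sup,
        hkerE, hkerE, hrangeE, hP, ← Submodule.comap_inf,
        Submodule.map_comap_subtype, Submodule.map_comap_subtype, Submodule.map_comap_subtype]
      calc (LinearMap.ker (D ^ a) ⊓ LinearMap.range D ⊔ LinearMap.ker (D ^ b)) ⊓ wt μ ⊓ Vp
          = ((LinearMap.ker (D ^ a) ⊓ LinearMap.range D ⊓ wt μ)
              ⊔ (LinearMap.ker (D ^ b) ⊓ wt μ)) ⊓ Vp := by rw [hdist]
        _ = ((wt μ ⊓ (LinearMap.ker (D ^ a) ⊓ LinearMap.range D))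
              ⊔ (wt μ ⊓ LinearMap.ker (D ^ b))) ⊓ Vp := by
            rw [inf_comm (LinearMap.ker (D ^ a) ⊓ LinearMap.range D) (wt μ),
              inf_comm (LinearMap.ker (D ^ b)) (wt μ)]
        _ = ((wt μ ⊓ (LinearMap.ker (D ^ a) ⊓ LinearMap.range D))
              ⊔ (wt μ ⊓ LinearMap.ker (D ^ b))) ⊓ (wt μ ⊓ Vp) := by
            refine le_antisymm (le_inf inf_le_left
              (le_inf (inf_le_left.trans hS'le) inf_le_right)) ?_
            exact inf_le_inf_left _ inf_le_right
    rw [hsub, Submodule.finrank_map_subtype_eq]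
  have tLQ : ∀ a b : ℕ,
      finrank ℂ ((LinearMap.ker (D ^ a) ⊓ LinearMap.range D ⊔ LinearMap.ker (D ^ b))
          ⊓ wt μ ⊓ Vm : Submodule ℂ V)
        = finrank ℂ ((LinearMap.ker (E ^ a) ⊓ LinearMap.range E ⊔ LinearMap.ker (E ^ b))
          ⊓ Q : Submodule ℂ (wt μ)) := by
    intro a b
    have hstabA : ∀ x ∈ LinearMap.ker (D ^ a) ⊓ LinearMap.range D,
        π x ∈ LinearMap.ker (D ^ a) ⊓ LinearMap.range D :=
      fun x hx => ⟨hkst a x hx.1, hrst x hx.2⟩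
    have hdist := stmt18_distrib (P := wt μ) π hπmem hπl hstabA (hkst b)
    have hS'le : (wt μ ⊓ (LinearMap.ker (D ^ a) ⊓ LinearMap.range D))
        ⊔ (wt μ ⊓ LinearMap.ker (D ^ b)) ≤ wt μ := sup_le inf_le_left inf_le_left
    have hsub : (LinearMap.ker (D ^ a) ⊓ LinearMap.range D ⊔ LinearMap.ker (D ^ b))
          ⊓ wt μ ⊓ Vm
        = Submodule.map (wt μ).subtype
          ((LinearMap.ker (E ^ a) ⊓ LinearMap.range E ⊔ LinearMap.ker (E ^ b)) ⊓ Q) := by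
      rw [Submodule.map_inf _ (Submodule.injective_subtype _), Submodule.map_sup,
        hkerE, hkerE, hrangeE, hQ, ← Submodule.comap_inf,
        Submodule.map_comap_subtype, Submodule.map_comap_subtype, Submodule.map_comap_subtype]
      calc (LinearMap.ker (D ^ a) ⊓ LinearMap.range D ⊔ LinearMap.ker (D ^ b)) ⊓ wt μ ⊓ Vm
          = ((LinearMap.ker (D ^ a) ⊓ LinearMap.range D ⊓ wt μ)
              ⊔ (LinearMap.ker (D ^ b) ⊓ wt μ)) ⊓ Vm := by rw [hdist]
        _ = ((wt μ ⊓ (LinearMap.ker (D ^ a) ⊓ LinearMap.range D))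
              ⊔ (wt μ ⊓ LinearMap.ker (D ^ b))) ⊓ Vm := by
            rw [inf_comm (LinearMap.ker (D ^ a) ⊓ LinearMap.range D) (wt μ),
              inf_comm (LinearMap.ker (D ^ b)) (wt μ)]
        _ = ((wt μ ⊓ (LinearMap.ker (D ^ a) ⊓ LinearMap.range D))
              ⊔ (wt μ ⊓ LinearMap.ker (D ^ b))) ⊓ (wt μ ⊓ Vm) := by
            refine le_antisymm (le_inf inf_le_left
              (le_inf (inf_le_left.trans hS'le) inf_le_right)) ?_
            exact inf_le_inf_left _ inf_le_right
    rw [hsub, Submodule.finrank_map_subtype_eq]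
  have tP : finrank ℂ (wt μ ⊓ Vp : Submodule ℂ V) = finrank ℂ P := by
    have hsub : wt μ ⊓ Vp = Submodule.map (wt μ).subtype P := by
      rw [hP, Submodule.map_comap_subtype]
    rw [hsub, Submodule.finrank_map_subtype_eq]
  have tQ : finrank ℂ (wt μ ⊓ Vm : Submodule ℂ V) = finrank ℂ Q := by
    have hsub : wt μ ⊓ Vm = Submodule.map (wt μ).subtype Q := by
      rw [hQ, Submodule.map_comap_subtype]
    rw [hsub, Submodule.finrank_map_subtype_eq]
  have haux := stmt18_aux P Q hPQ E hpE hqE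
  rw [tP, tQ]
  refine Eq.trans (finsum_congr fun k => ?_) haux
  rw [tmainP (2 * k + 1), tmainQ (2 * k + 1), tLP (2 * k + 1) (2 * k), tLQ (2 * k + 1) (2 * k)]
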